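/- Let n ≥ 2 and 0 ≤ k ≤ 2n−3. For every nonzero ξ ∈ ℝ^{4n}, the symmetrizing symbol map s_{2n−1}^{2n−k−3}(ξ) : Λ^{2n−1} ℂ^{2n} ⊗ ⊙^{2n−k−3} ℂ² → Λ^{2n} ℂ^{2n} ⊗ ⊙^{2n−k−2} ℂ² is surjective. (This is the exactness of the symbol sequence of the k-Cauchy–Fueter complex at its last term.) -/

import Mathlib

noncomputable section

/-- The complex `2n × 2` matrix `(ξ_{AA'})` associated to `ξ ∈ ℝ^{4n}`:
row `2l` is `(ξ_{4l+1} + i ξ_{4l+2}, −ξ_{4l+3} − i ξ_{4l+4})` and row `2l+1` is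
`(ξ_{4l+3} − i ξ_{4l+4}, ξ_{4l+1} − i ξ_{4l+2})` (using 1-based names, 0-based indices). -/
def xiMat (n : ℕ) (ξ : Fin (4 * n) → ℝ) : Matrix (Fin (2 * n)) (Fin 2) ℂ :=
  Matrix.of fun A A' =>
    if A.val % 2 = 0 then
      (if A'.val = 0 then
        (⟨ξ ⟨4 * (A.val / 2), by have := A.isLt; omega⟩,
          ξ ⟨4 * (A.val / 2) + 1, by have := A.isLt; omega⟩⟩ : ℂ)
      else
        (⟨-ξ ⟨4 * (A.val / 2) + 2, by have := A.isLt; omega⟩,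
          -ξ ⟨4 * (A.val / 2) + 3, by have := A.isLt; omega⟩⟩ : ℂ))
    else
      (if A'.val = 0 then
        (⟨ξ ⟨4 * (A.val / 2) + 2, by have := A.isLt; omega⟩,
          -ξ ⟨4 * (A.val / 2) + 3, by have := A.isLt; omega⟩⟩ : ℂ)
      else
        (⟨ξ ⟨4 * (A.val / 2), by have := A.isLt; omega⟩,
          -ξ ⟨4 * (A.val / 2) + 1, by have := A.isLt; omega⟩⟩ : ℂ))

/-- The raised epsilon symbol on primed indices: `ε^{01} = −1`, `ε^{10} = 1`. -/
def epsUp (a b : Fin 2) : ℂ :=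
  if a.val = 0 ∧ b.val = 1 then -1 else if a.val = 1 ∧ b.val = 0 then 1 else 0

/-- `ξ_A{}^{A'} = ∑_{B'} ξ_{AB'} ε^{B'A'}`. -/
def xiUp (n : ℕ) (ξ : Fin (4 * n) → ℝ) (A : Fin (2 * n)) (A' : Fin 2) : ℂ :=
  ∑ B' : Fin 2, xiMat n ξ A B' * epsUp B' A'

/-- Membership in `Λ^q ℂ^{2n} ⊗ ⊙^p ℂ²`: totally antisymmetric in the `q` unprimed
arguments and totally symmetric in the `p` primed arguments. -/
def IsAltSym (n q p : ℕ) (ϑ : (Fin q → Fin (2 * n)) → (Fin p → Fin 2) → ℂ) : Prop :=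
  (∀ (σ : Equiv.Perm (Fin q)) (a : Fin q → Fin (2 * n)) (b : Fin p → Fin 2),
      ϑ (a ∘ σ) b = ((Equiv.Perm.sign σ : ℤ) : ℂ) * ϑ a b) ∧
  (∀ (σ : Equiv.Perm (Fin p)) (a : Fin q → Fin (2 * n)) (b : Fin p → Fin 2),
      ϑ a (b ∘ σ) = ϑ a b)

/-- The first-order symbol map
`σ_j^{(p+1)}(ξ) : Λ^j ℂ^{2n} ⊗ ⊙^{p+1} ℂ² → Λ^{j+1} ℂ^{2n} ⊗ ⊙^{p} ℂ²`,
`(σϑ)(A₀,…,A_j; B) = (1/(j+1)) ∑_s (−1)^s ∑_{a} ξ_{A_s}{}^{a} ϑ(A₀,…,Â_s,…,A_j; a, B)`. -/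
def symb (n j p : ℕ) (ξ : Fin (4 * n) → ℝ)
    (ϑ : (Fin j → Fin (2 * n)) → (Fin (p + 1) → Fin 2) → ℂ) :
    (Fin (j + 1) → Fin (2 * n)) → (Fin p → Fin 2) → ℂ :=
  fun A B => ((j + 1 : ℕ) : ℂ)⁻¹ * ∑ s : Fin (j + 1), (-1 : ℂ) ^ (s : ℕ) *
    ∑ a : Fin 2, xiUp n ξ (A s) a * ϑ (A ∘ s.succAbove) (Fin.cons a B)

/-- The symmetrizing symbol map `s_q^p(ξ) : Λ^q ℂ^{2n} ⊗ ⊙^p ℂ² → Λ^{q+1} ℂ^{2n} ⊗ ⊙^{p+1} ℂ²`: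
antisymmetrization (normalized by `1/(q+1)!`) and symmetrization (normalized by `1/(p+1)!`)
of `(A₁,…,A_{q+1}; B₁,…,B_{p+1}) ↦ ξ_{A₁}{}^{B₁} ϑ(A₂,…,A_{q+1}; B₂,…,B_{p+1})`. -/
def ssymb (n q p : ℕ) (ξ : Fin (4 * n) → ℝ)
    (ϑ : (Fin q → Fin (2 * n)) → (Fin p → Fin 2) → ℂ) :
    (Fin (q + 1) → Fin (2 * n)) → (Fin (p + 1) → Fin 2) → ℂ :=
  fun A B => ((Nat.factorial (q + 1) : ℕ) : ℂ)⁻¹ * ((Nat.factorial (p + 1) : ℕ) : ℂ)⁻¹ *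
    ∑ σ : Equiv.Perm (Fin (q + 1)), ∑ π : Equiv.Perm (Fin (p + 1)),
      ((Equiv.Perm.sign σ : ℤ) : ℂ) *
        (xiUp n ξ (A (σ 0)) (B (π 0)) *
          ϑ (fun t => A (σ t.succ)) (fun t => B (π t.succ)))


lemma sign_sq {m : ℕ} (σ : Equiv.Perm (Fin m)) :
    ((Equiv.Perm.sign σ : ℤ) : ℂ) * ((Equiv.Perm.sign σ : ℤ) : ℂ) = 1 := by
  rcases Int.units_eq_one_or (Equiv.Perm.sign σ) with h | h <;> rw [h] <;> norm_num

lemma alt_zero {m : ℕ} {β : Type*} (f : (Fin m → β) → ℂ)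
    (halt : ∀ (σ : Equiv.Perm (Fin m)) (a : Fin m → β),
      f (a ∘ σ) = ((Equiv.Perm.sign σ : ℤ) : ℂ) * f a)
    (a : Fin m → β) {i j : Fin m} (hij : i ≠ j) (h : a i = a j) : f a = 0 := by
  have h1 := halt (Equiv.swap i j) a
  have h2 : a ∘ (Equiv.swap i j) = a := by
    funext x
    rcases eq_or_ne x i with rfl | hxi
    · simp [h]
    rcases eq_or_ne x j with rfl | hxj
    · simp [h]
    · simp [Equiv.swap_apply_of_ne_of_ne hxi hxj]
  rw [h2, Equiv.Perm.sign_swap hij] at h1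
  push_cast at h1
  linear_combination h1 / 2

lemma alt_ext {m N : ℕ} (hmN : m = N) (f g : (Fin m → Fin N) → ℂ)
    (hf : ∀ (σ : Equiv.Perm (Fin m)) (a : Fin m → Fin N),
      f (a ∘ σ) = ((Equiv.Perm.sign σ : ℤ) : ℂ) * f a)
    (hgg : ∀ (σ : Equiv.Perm (Fin m)) (a : Fin m → Fin N),
      g (a ∘ σ) = ((Equiv.Perm.sign σ : ℤ) : ℂ) * g a)
    (h : f (fun i => Fin.cast hmN i) = g (fun i => Fin.cast hmN i)) : f = g := by
  funext A
  by_cases hA : Function.Injective A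
  · have hbij : Function.Bijective A := by
      rw [Fintype.bijective_iff_injective_and_card]
      exact ⟨hA, by simp [hmN]⟩
    set τ : Equiv.Perm (Fin m) := (Equiv.ofBijective A hbij).trans (finCongr hmN).symm with hτ
    have hAe : A = (fun i => Fin.cast hmN i) ∘ ⇑τ := by
      funext x
      simp [hτ, Fin.cast, finCongr]
    rw [hAe, hf, hgg, h]
  · obtain ⟨i, j, hij, hne⟩ := Function.not_injective_iff.mp hA
    rw [alt_zero f hf A hne hij, alt_zero g hgg A hne hij]

lemma perm_sum_sign {q : ℕ} (τ : Equiv.Perm (Fin q)) (M : (Fin q → Fin q) → ℂ) :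
    ∑ σ : Equiv.Perm (Fin q), ((Equiv.Perm.sign σ : ℤ) : ℂ) * M (⇑τ ∘ ⇑σ) =
    ((Equiv.Perm.sign τ : ℤ) : ℂ) *
      ∑ σ : Equiv.Perm (Fin q), ((Equiv.Perm.sign σ : ℤ) : ℂ) * M ⇑σ := by
  have h1 := Equiv.sum_comp (Equiv.mulLeft τ⁻¹)
    (fun σ : Equiv.Perm (Fin q) => ((Equiv.Perm.sign σ : ℤ) : ℂ) * M (⇑τ ∘ ⇑σ))
  rw [← h1, Finset.mul_sum]
  refine Finset.sum_congr rfl fun σ _ => ?_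
  have h2 : ⇑τ ∘ ⇑(Equiv.mulLeft τ⁻¹ σ) = ⇑σ := by
    funext x
    simp
  have h3 : Equiv.Perm.sign (Equiv.mulLeft τ⁻¹ σ : Equiv.Perm (Fin q)) =
      Equiv.Perm.sign τ * Equiv.Perm.sign σ := by
    have : Equiv.mulLeft τ⁻¹ σ = τ⁻¹ * σ := rfl
    rw [this, map_mul, map_inv, Int.units_inv_eq_self]
  rw [h2, h3]
  push_cast
  ring

lemma sum_perm_zero {m : ℕ} (F : Fin (m + 1) → ℂ) :
    ∑ σ : Equiv.Perm (Fin (m + 1)), F (σ 0) = (Nat.factorial m : ℂ) * ∑ c, F c := by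
  rw [← Equiv.sum_comp (Equiv.Perm.decomposeFin.symm) (fun σ : Equiv.Perm (Fin (m+1)) => F (σ 0)),
    Fintype.sum_prod_type]
  simp [Equiv.Perm.decomposeFin_symm_apply_zero, Finset.sum_const, Fintype.card_perm,
    Finset.mul_sum, mul_comm]

lemma ssymb_alt (n q p : ℕ) (ξ : Fin (4 * n) → ℝ)
    (ϑ : (Fin q → Fin (2 * n)) → (Fin p → Fin 2) → ℂ)
    (τ : Equiv.Perm (Fin (q + 1))) (A : Fin (q + 1) → Fin (2 * n)) (B : Fin (p + 1) → Fin 2) :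
    ssymb n q p ξ ϑ (A ∘ ⇑τ) B =
      ((Equiv.Perm.sign τ : ℤ) : ℂ) * ssymb n q p ξ ϑ A B := by
  simp only [ssymb]
  have key := perm_sum_sign τ (fun F : Fin (q+1) → Fin (q+1) =>
    ∑ π : Equiv.Perm (Fin (p + 1)),
      (xiUp n ξ (A (F 0)) (B (π 0)) * ϑ (fun t => A (F t.succ)) (fun t => B (π t.succ))))
  have lhs_eq : (∑ σ : Equiv.Perm (Fin (q + 1)), ∑ π : Equiv.Perm (Fin (p + 1)),
      ((Equiv.Perm.sign σ : ℤ) : ℂ) *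
        (xiUp n ξ ((A ∘ ⇑τ) (σ 0)) (B (π 0)) *
          ϑ (fun t => (A ∘ ⇑τ) (σ t.succ)) (fun t => B (π t.succ)))) =
      ∑ σ : Equiv.Perm (Fin (q + 1)), ((Equiv.Perm.sign σ : ℤ) : ℂ) *
        ∑ π : Equiv.Perm (Fin (p + 1)),
          (xiUp n ξ (A ((⇑τ ∘ ⇑σ) 0)) (B (π 0)) *
            ϑ (fun t => A ((⇑τ ∘ ⇑σ) t.succ)) (fun t => B (π t.succ))) := by
    refine Finset.sum_congr rfl fun σ _ => ?_
    rw [Finset.mul_sum]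
    rfl
  have rhs_eq : (∑ σ : Equiv.Perm (Fin (q + 1)), ∑ π : Equiv.Perm (Fin (p + 1)),
      ((Equiv.Perm.sign σ : ℤ) : ℂ) *
        (xiUp n ξ (A (σ 0)) (B (π 0)) *
          ϑ (fun t => A (σ t.succ)) (fun t => B (π t.succ)))) =
      ∑ σ : Equiv.Perm (Fin (q + 1)), ((Equiv.Perm.sign σ : ℤ) : ℂ) *
        ∑ π : Equiv.Perm (Fin (p + 1)),
          (xiUp n ξ (A (σ 0)) (B (π 0)) *
            ϑ (fun t => A (σ t.succ)) (fun t => B (π t.succ))) := by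
    refine Finset.sum_congr rfl fun σ _ => ?_
    rw [Finset.mul_sum]
  rw [lhs_eq, rhs_eq, key]
  ring

lemma exists_mu (n : ℕ) (ξ : Fin (4 * n) → ℝ) (hξ : ξ ≠ 0) :
    ∃ μ : Fin (2 * n) → Fin 2 → ℂ, ∀ a b : Fin 2,
      ∑ C : Fin (2 * n), μ C a * xiUp n ξ C b = if a = b then 1 else 0 := by
  obtain ⟨j, hj0⟩ := Function.ne_iff.mp hξ
  have hj : ξ j ≠ 0 := hj0
  set l : ℕ := (j : ℕ) / 4 with hl
  have hj4 := j.isLt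
  have hr0 : 2 * l < 2 * n := by omega
  have hr1 : 2 * l + 1 < 2 * n := by omega
  set r0 : Fin (2 * n) := ⟨2 * l, hr0⟩ with hr0d
  set r1 : Fin (2 * n) := ⟨2 * l + 1, hr1⟩ with hr1d
  have ha : 4 * l < 4 * n := by omega
  have hb : 4 * l + 1 < 4 * n := by omega
  have hc : 4 * l + 2 < 4 * n := by omega
  have hd : 4 * l + 3 < 4 * n := by omega
  set a : ℝ := ξ ⟨4 * l, ha⟩ with hav
  set b : ℝ := ξ ⟨4 * l + 1, hb⟩ with hbv
  set c : ℝ := ξ ⟨4 * l + 2, hc⟩ with hcv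
  set d : ℝ := ξ ⟨4 * l + 3, hd⟩ with hdv
  have e00 : xiUp n ξ r0 0 = Complex.mk (-c) (-d) := by
    simp [xiUp, xiMat, epsUp, Fin.sum_univ_two, hr0d, Nat.mul_mod_right,
      Nat.mul_div_cancel_left, ← hcv, ← hdv]
  have e01 : xiUp n ξ r0 1 = Complex.mk (-a) (-b) := by
    simp [xiUp, xiMat, epsUp, Fin.sum_univ_two, hr0d, Nat.mul_mod_right,
      Nat.mul_div_cancel_left, Complex.ext_iff, ← hav, ← hbv]
  have e10 : xiUp n ξ r1 0 = Complex.mk a (-b) := by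
    have h1 : (2 * l + 1) % 2 = 1 := by omega
    have h2 : (2 * l + 1) / 2 = l := by omega
    simp [xiUp, xiMat, epsUp, Fin.sum_univ_two, hr1d, h1, h2, ← hav, ← hbv]
  have e11 : xiUp n ξ r1 1 = Complex.mk (-c) d := by
    have h1 : (2 * l + 1) % 2 = 1 := by omega
    have h2 : (2 * l + 1) / 2 = l := by omega
    simp [xiUp, xiMat, epsUp, Fin.sum_univ_two, hr1d, h1, h2, Complex.ext_iff,
      ← hcv, ← hdv]
  set P : Matrix (Fin 2) (Fin 2) ℂ :=
    Matrix.of (fun i b' => xiUp n ξ (if i = 0 then r0 else r1) b') with hP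
  have p00 : P 0 0 = xiUp n ξ r0 0 := by simp [hP]
  have p01 : P 0 1 = xiUp n ξ r0 1 := by simp [hP]
  have p10 : P 1 0 = xiUp n ξ r1 0 := by
    simp [hP, (by decide : ¬((1 : Fin 2) = 0))]
  have p11 : P 1 1 = xiUp n ξ r1 1 := by
    simp [hP, (by decide : ¬((1 : Fin 2) = 0))]
  have hPdet : P.det = ((a ^ 2 + b ^ 2 + c ^ 2 + d ^ 2 : ℝ) : ℂ) := by
    rw [Matrix.det_fin_two, p00, p01, p10, p11, e00, e01, e10, e11]
    apply Complex.ext <;>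
      simp [Complex.mul_re, Complex.mul_im, ← Complex.ofReal_pow] <;> ring
  have hpos : 0 < a ^ 2 + b ^ 2 + c ^ 2 + d ^ 2 := by
    have hj2 : 0 < ξ j ^ 2 :=
      lt_of_le_of_ne (sq_nonneg _) (Ne.symm (pow_ne_zero 2 hj))
    have key : ξ j = a ∨ ξ j = b ∨ ξ j = c ∨ ξ j = d := by
      have h4 : (j : ℕ) % 4 = 0 ∨ (j : ℕ) % 4 = 1 ∨ (j : ℕ) % 4 = 2 ∨ (j : ℕ) % 4 = 3 := by
        omega
      rcases h4 with h | h | h | h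
      · left; rw [hav]; congr 1; exact Fin.ext (show (j : ℕ) = 4 * l by omega)
      · right; left; rw [hbv]; congr 1
        exact Fin.ext (show (j : ℕ) = 4 * l + 1 by omega)
      · right; right; left; rw [hcv]; congr 1
        exact Fin.ext (show (j : ℕ) = 4 * l + 2 by omega)
      · right; right; right; rw [hdv]; congr 1
        exact Fin.ext (show (j : ℕ) = 4 * l + 3 by omega)
    rcases key with h | h | h | h <;> rw [h] at hj2 <;>
      nlinarith [sq_nonneg a, sq_nonneg b, sq_nonneg c, sq_nonneg d]
  have hdet : P.det ≠ 0 := by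
    rw [hPdet]
    exact_mod_cast ne_of_gt hpos
  have hinv : P⁻¹ * P = 1 := Matrix.nonsing_inv_mul P (isUnit_iff_ne_zero.mpr hdet)
  refine ⟨fun C aa => if C = r0 then P⁻¹ aa 0 else if C = r1 then P⁻¹ aa 1 else 0,
    fun aa bb => ?_⟩
  have hr01 : r0 ≠ r1 := by
    intro h
    have := congrArg Fin.val h
    simp [hr0d, hr1d] at this
  have split : ∀ C : Fin (2 * n),
      (if C = r0 then P⁻¹ aa 0 else if C = r1 then P⁻¹ aa 1 else 0) * xiUp n ξ C bb =
      (if C = r0 then P⁻¹ aa 0 * xiUp n ξ r0 bb else 0) +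
      (if C = r1 then P⁻¹ aa 1 * xiUp n ξ r1 bb else 0) := by
    intro C
    rcases eq_or_ne C r0 with rfl | h0
    · simp [hr01]
    rcases eq_or_ne C r1 with rfl | h1
    · simp [h0]
    · simp [h0, h1]
  rw [Finset.sum_congr rfl fun C _ => split C, Finset.sum_add_distrib]
  simp only [Finset.sum_ite_eq' Finset.univ, Finset.mem_univ, if_pos]
  have hP0 : xiUp n ξ r0 bb = P 0 bb := by simp [hP]
  have hP1 : xiUp n ξ r1 bb = P 1 bb := by
    simp [hP, (by decide : ¬((1 : Fin 2) = 0))]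
  rw [hP0, hP1]
  have := congrFun (congrFun hinv aa) bb
  rw [Matrix.mul_apply, Fin.sum_univ_two, Matrix.one_apply] at this
  exact this
/-- Surjectivity of the last symbol map of the `k`-Cauchy–Fueter complex: for `n ≥ 2`,
`0 ≤ k ≤ 2n−3` (here `p = 2n−k−3 ≥ 0` and `k+p+3 = 2n`) and nonzero `ξ ∈ ℝ^{4n}`, the map
`s_{2n−1}^{2n−k−3}(ξ) : Λ^{2n−1} ℂ^{2n} ⊗ ⊙^{2n−k−3} ℂ² → Λ^{2n} ℂ^{2n} ⊗ ⊙^{2n−k−2} ℂ²`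
is surjective. -/
theorem ssymb_last_surjective (n k p : ℕ) (hn : 2 ≤ n) (hkp : k + p + 3 = 2 * n)
    (ξ : Fin (4 * n) → ℝ) (hξ : ξ ≠ 0)
    (g : (Fin (k + p + 3) → Fin (2 * n)) → (Fin (p + 1) → Fin 2) → ℂ)
    (hg : IsAltSym n (k + p + 3) (p + 1) g) :
    ∃ ϑ : (Fin (k + p + 2) → Fin (2 * n)) → (Fin p → Fin 2) → ℂ,
      IsAltSym n (k + p + 2) p ϑ ∧ ssymb n (k + p + 2) p ξ ϑ = g := by
  obtain ⟨μ, hμ⟩ := exists_mu n ξ hξ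
  have hm : k + p + 3 = 2 * n := hkp
  set ee : Fin (k + p + 3) → Fin (2 * n) := fun i => Fin.cast hm i with hee
  set ϑ0 : (Fin (k + p + 2) → Fin (2 * n)) → (Fin p → Fin 2) → ℂ :=
    fun A B => ((2 * n : ℕ) : ℂ) *
      ∑ C : Fin (2 * n), ∑ a : Fin 2, μ C a * g (Fin.cons C A) (Fin.cons a B) with hϑ0
  have hϑalt : ∀ (σ : Equiv.Perm (Fin (k + p + 2))) (A : Fin (k + p + 2) → Fin (2 * n))
      (B : Fin p → Fin 2), ϑ0 (A ∘ ⇑σ) B = ((Equiv.Perm.sign σ : ℤ) : ℂ) * ϑ0 A B := by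
    intro σ A B
    have key : ∀ (C : Fin (2 * n)) (D : Fin (p + 1) → Fin 2),
        g (Fin.cons C (A ∘ ⇑σ)) D = ((Equiv.Perm.sign σ : ℤ) : ℂ) * g (Fin.cons C A) D := by
      intro C D
      have hσ' : Fin.cons C (A ∘ ⇑σ) =
          (Fin.cons C A) ∘ ⇑(Equiv.Perm.decomposeFin.symm (0, σ)) := by
        funext x
        refine Fin.cases ?_ (fun i => ?_) x
        · simp [Equiv.Perm.decomposeFin_symm_apply_zero]
        · simp [Equiv.Perm.decomposeFin_symm_apply_succ]
      rw [hσ', hg.1, Equiv.Perm.decomposeFin.symm_sign]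
      simp
    simp only [hϑ0]
    have expand : (∑ C : Fin (2 * n), ∑ a : Fin 2,
        μ C a * g (Fin.cons C (A ∘ ⇑σ)) (Fin.cons a B)) =
        ((Equiv.Perm.sign σ : ℤ) : ℂ) * ∑ C : Fin (2 * n), ∑ a : Fin 2,
          μ C a * g (Fin.cons C A) (Fin.cons a B) := by
      rw [Finset.mul_sum]
      refine Finset.sum_congr rfl fun C _ => ?_
      rw [Finset.mul_sum]
      refine Finset.sum_congr rfl fun a _ => ?_
      rw [key]
      ring
    rw [expand]
    ring
  have hϑsym : ∀ (π : Equiv.Perm (Fin p)) (A : Fin (k + p + 2) → Fin (2 * n))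
      (B : Fin p → Fin 2), ϑ0 A (B ∘ ⇑π) = ϑ0 A B := by
    intro π A B
    have key : ∀ (C : Fin (2 * n)) (a : Fin 2),
        g (Fin.cons C A) (Fin.cons a (B ∘ ⇑π)) = g (Fin.cons C A) (Fin.cons a B) := by
      intro C a
      have hπ' : Fin.cons a (B ∘ ⇑π) =
          (Fin.cons a B) ∘ ⇑(Equiv.Perm.decomposeFin.symm (0, π)) := by
        funext x
        refine Fin.cases ?_ (fun i => ?_) x
        · simp [Equiv.Perm.decomposeFin_symm_apply_zero]
        · simp [Equiv.Perm.decomposeFin_symm_apply_succ]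
      rw [hπ', hg.2]
    simp only [hϑ0, key]
  refine ⟨ϑ0, ⟨hϑalt, hϑsym⟩, ?_⟩
  funext A B
  have main : ssymb n (k + p + 2) p ξ ϑ0 ee B = g ee B := by
    have hinner : ∀ (σ : Equiv.Perm (Fin (k + p + 3))) (D : Fin p → Fin 2),
        (∑ C : Fin (2 * n), ∑ a : Fin 2,
          μ C a * g (Fin.cons C (fun t : Fin (k + p + 2) => ee (σ t.succ))) (Fin.cons a D)) =
        ((Equiv.Perm.sign σ : ℤ) : ℂ) *
          ∑ a : Fin 2, μ (ee (σ 0)) a * g ee (Fin.cons a D) := by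
      intro σ D
      rw [Finset.sum_eq_single (ee (σ 0))]
      · have hcons : Fin.cons (ee (σ 0)) (fun t : Fin (k + p + 2) => ee (σ t.succ)) =
            ee ∘ ⇑σ := by
          funext x
          refine Fin.cases ?_ (fun i => ?_) x <;> simp
        rw [hcons, Finset.mul_sum]
        refine Finset.sum_congr rfl fun a _ => ?_
        rw [hg.1 σ ee (Fin.cons a D)]
        ring
      · intro C _ hC
        apply Finset.sum_eq_zero
        intro a _
        have hrep : ∃ u : Fin (k + p + 2), ee (σ u.succ) = C := by
          set s : Fin (k + p + 3) := Fin.cast hm.symm C with hs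
          have hes : ee s = C := by
            simp [hee, hs, Fin.ext_iff]
          have hsne : s ≠ σ 0 := by
            intro h
            exact hC (by rw [← hes, h])
          have h0 : σ⁻¹ s ≠ 0 := by
            intro h
            apply hsne
            have := congrArg σ h
            simpa using this
          refine ⟨(σ⁻¹ s).pred h0, ?_⟩
          rw [Fin.succ_pred]
          rw [show σ (σ⁻¹ s) = s from Equiv.apply_symm_apply σ s, hes]
        obtain ⟨u, hu⟩ := hrep
        refine mul_eq_zero_of_right _ ?_
        refine alt_zero (fun A' => g A' (Fin.cons a D)) (fun τ A' => hg.1 τ A' _) _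
          (Ne.symm (Fin.succ_ne_zero u)) ?_
        simp [hu]
      · intro h
        exact absurd (Finset.mem_univ _) h
    have hcol : ∀ (b : Fin 2) (D : Fin p → Fin 2),
        (∑ c : Fin (k + p + 3), xiUp n ξ (ee c) b *
          ∑ a : Fin 2, μ (ee c) a * g ee (Fin.cons a D)) = g ee (Fin.cons b D) := by
      intro b D
      have step : (∑ c : Fin (k + p + 3), xiUp n ξ (ee c) b *
            ∑ a : Fin 2, μ (ee c) a * g ee (Fin.cons a D)) =
          ∑ a : Fin 2, (∑ c : Fin (k + p + 3), μ (ee c) a * xiUp n ξ (ee c) b) *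
            g ee (Fin.cons a D) := by
        calc (∑ c : Fin (k + p + 3), xiUp n ξ (ee c) b *
              ∑ a : Fin 2, μ (ee c) a * g ee (Fin.cons a D))
            = ∑ c : Fin (k + p + 3), ∑ a : Fin 2,
                μ (ee c) a * xiUp n ξ (ee c) b * g ee (Fin.cons a D) := by
              refine Finset.sum_congr rfl fun c _ => ?_
              rw [Finset.mul_sum]
              refine Finset.sum_congr rfl fun a _ => ?_
              ring
          _ = ∑ a : Fin 2, ∑ c : Fin (k + p + 3),
                μ (ee c) a * xiUp n ξ (ee c) b * g ee (Fin.cons a D) := Finset.sum_comm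
          _ = ∑ a : Fin 2, (∑ c : Fin (k + p + 3), μ (ee c) a * xiUp n ξ (ee c) b) *
                g ee (Fin.cons a D) := by
              refine Finset.sum_congr rfl fun a _ => ?_
              rw [Finset.sum_mul]
      rw [step]
      have reind : ∀ a : Fin 2, (∑ c : Fin (k + p + 3), μ (ee c) a * xiUp n ξ (ee c) b) =
          ∑ C : Fin (2 * n), μ C a * xiUp n ξ C b := by
        intro a
        exact Equiv.sum_comp (finCongr hm) (fun C => μ C a * xiUp n ξ C b)
      simp only [reind, hμ]
      simp
    simp only [ssymb, hϑ0]
    have step1 : ∀ (σ : Equiv.Perm (Fin (k + p + 3))) (π : Equiv.Perm (Fin (p + 1))),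
        ((Equiv.Perm.sign σ : ℤ) : ℂ) *
          (xiUp n ξ (ee (σ 0)) (B (π 0)) *
            (((2 * n : ℕ) : ℂ) * ∑ C : Fin (2 * n), ∑ a : Fin 2,
              μ C a * g (Fin.cons C (fun t => ee (σ t.succ)))
                (Fin.cons a (fun t => B (π t.succ))))) =
        ((2 * n : ℕ) : ℂ) * (xiUp n ξ (ee (σ 0)) (B (π 0)) *
          ∑ a : Fin 2, μ (ee (σ 0)) a * g ee (Fin.cons a (fun t => B (π t.succ)))) := by
      intro σ π
      rw [hinner σ (fun t => B (π t.succ))]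
      have h2 := sign_sq σ
      set S := ∑ a : Fin 2, μ (ee (σ 0)) a * g ee (Fin.cons a (fun t => B (π t.succ)))
      set x := xiUp n ξ (ee (σ 0)) (B (π 0))
      linear_combination (((2 * n : ℕ) : ℂ) * x * S) * h2
    rw [Finset.sum_congr rfl fun σ _ => Finset.sum_congr rfl fun π _ => step1 σ π]
    rw [Finset.sum_comm]
    have step2 : ∀ π : Equiv.Perm (Fin (p + 1)),
        (∑ σ : Equiv.Perm (Fin (k + p + 3)),
          ((2 * n : ℕ) : ℂ) * (xiUp n ξ (ee (σ 0)) (B (π 0)) *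
            ∑ a : Fin 2, μ (ee (σ 0)) a * g ee (Fin.cons a (fun t => B (π t.succ))))) =
        ((Nat.factorial (k + p + 2) : ℕ) : ℂ) * (((2 * n : ℕ) : ℂ) * g ee B) := by
      intro π
      have hperm := sum_perm_zero (m := k + p + 2)
        (fun c => ((2 * n : ℕ) : ℂ) * (xiUp n ξ (ee c) (B (π 0)) *
          ∑ a : Fin 2, μ (ee c) a * g ee (Fin.cons a (fun t => B (π t.succ)))))
      refine hperm.trans ?_
      congr 1
      rw [← Finset.mul_sum]
      congr 1
      have hBπ : Fin.cons (B (π 0)) (fun t : Fin p => B (π t.succ)) = B ∘ ⇑π := by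
        funext x
        refine Fin.cases ?_ (fun i => ?_) x <;> simp
      rw [hcol (B (π 0)) (fun t => B (π t.succ)), hBπ, hg.2]
    rw [Finset.sum_congr rfl fun π _ => step2 π]
    rw [Finset.sum_const, Finset.card_univ, Fintype.card_perm, Fintype.card_fin]
    have h2n : ((2 * n : ℕ) : ℂ) = ((k + p + 3 : ℕ) : ℂ) := by rw [hm]
    have hfac : ((Nat.factorial (k + p + 3) : ℕ) : ℂ) =
        ((k + p + 3 : ℕ) : ℂ) * ((Nat.factorial (k + p + 2) : ℕ) : ℂ) := by
      rw [show k + p + 3 = (k + p + 2) + 1 from rfl, Nat.factorial_succ]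
      push_cast
      ring
    rw [nsmul_eq_mul, h2n, hfac]
    have hne1 : ((k + p + 3 : ℕ) : ℂ) ≠ 0 := Nat.cast_ne_zero.mpr (by omega)
    have hne2 : ((Nat.factorial (k + p + 2) : ℕ) : ℂ) ≠ 0 :=
      Nat.cast_ne_zero.mpr (Nat.factorial_ne_zero _)
    have hne3 : ((Nat.factorial (p + 1) : ℕ) : ℂ) ≠ 0 :=
      Nat.cast_ne_zero.mpr (Nat.factorial_ne_zero _)
    have habc : ∀ (x y z w : ℂ), x ≠ 0 → y ≠ 0 → z ≠ 0 →
        (x * y)⁻¹ * z⁻¹ * (z * (y * (x * w))) = w := by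
      intro x y z w hx hy hz
      field_simp
    exact habc _ _ _ _ hne1 hne2 hne3
  exact congrFun (alt_ext hm (fun A' => ssymb n (k + p + 2) p ξ ϑ0 A' B)
    (fun A' => g A' B)
    (fun τ A' => ssymb_alt n (k + p + 2) p ξ ϑ0 τ A' B)
    (fun τ A' => hg.1 τ A' B) main) A
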